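/- Let (R, m) be a Noetherian local ring with injective hull E of the residue field R/m, and let f : M → N be an R-module map where M is a finitely generated free R-module. Then f is pure if and only if the induced map f ⊗ id_E : M ⊗_R E → N ⊗_R E is injective. -/

import Mathlib

universe u

open TensorProduct

/-- A linear map `f : M → N` is *pure* if it remains injective after tensoring with every
`R`-module. -/
def LinearMap.IsPure {R : Type u} [CommRing R] {M N : Type u}
    [AddCommGroup M] [AddCommGroup N] [Module R M] [Module R N] (f : M →ₗ[R] N) : Prop :=
  ∀ (K : Type u) [AddCommGroup K] [Module R K], Function.Injective (LinearMap.rTensor K f)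

/-- `E` is a cogenerator: any nonzero element of any module admits a functional to `E`
not vanishing on it. -/
lemma exists_hom_to_E_ne_zero {R : Type u} [CommRing R] [IsLocalRing R]
    {E : Type u} [AddCommGroup E] [Module R E]
    (hE_inj : Module.Injective R E)
    (i : IsLocalRing.ResidueField R →ₗ[R] E) (hi : Function.Injective i)
    (K : Type u) [AddCommGroup K] [Module R K] (k : K) (hk : k ≠ 0) :
    ∃ φ : K →ₗ[R] E, φ k ≠ 0 := by
  classical
  set t : R →ₗ[R] K := LinearMap.toSpanSingleton R K k with ht
  have hker : LinearMap.ker t ≤ IsLocalRing.maximalIdeal R := by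
    apply IsLocalRing.le_maximalIdeal
    intro h
    apply hk
    have h1 : (1 : R) ∈ LinearMap.ker t := h ▸ Submodule.mem_top
    simpa [ht] using h1
  set h0 : R →ₗ[R] E := i ∘ₗ (IsLocalRing.maximalIdeal R).mkQ with hh0
  have hker' : LinearMap.ker t ≤ LinearMap.ker h0 := by
    intro r hr
    have hm : r ∈ IsLocalRing.maximalIdeal R := hker hr
    have hz : (IsLocalRing.maximalIdeal R).mkQ r = 0 := by
      rw [Submodule.mkQ_apply, Submodule.Quotient.mk_eq_zero]; exact hm
    have : h0 r = i ((IsLocalRing.maximalIdeal R).mkQ r) := rfl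
    rw [LinearMap.mem_ker, this, hz]; exact i.map_zero
  set g : (R ⧸ LinearMap.ker t) →ₗ[R] E := Submodule.liftQ _ h0 hker' with hg
  set q : (R ⧸ LinearMap.ker t) →ₗ[R] K :=
    (LinearMap.range t).subtype ∘ₗ (t.quotKerEquivRange : (R ⧸ LinearMap.ker t) →ₗ[R] _) with hq
  have hqinj : Function.Injective q := by
    intro a b hab
    exact t.quotKerEquivRange.injective (Subtype.val_injective hab)
  obtain ⟨φ, hφ⟩ := hE_inj.out q hqinj g
  refine ⟨φ, ?_⟩
  have hk1 : q (Submodule.Quotient.mk 1) = k := by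
    show ((t.quotKerEquivRange (Submodule.Quotient.mk 1) : LinearMap.range t) : K) = k
    rw [t.quotKerEquivRange_apply_mk]
    simp [ht]
  rw [← hk1, hφ]
  have : g (Submodule.Quotient.mk 1) = i 1 := by
    rw [hg, Submodule.liftQ_apply]
    rfl
  rw [this]
  intro h
  have : (1 : IsLocalRing.ResidueField R) = 0 := hi (by simpa using h)
  exact one_ne_zero this

/-- **Hochster–Huneke purity criterion.** Let `(R, m)` be a Noetherian local
ring, `E` an injective hull of the residue field `R/m` (i.e. an injective module together
with an essential embedding of the residue field), and `f : M → N` an `R`-module map with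
`M` finitely generated and free.  Then `f` is pure iff `f ⊗ id_E` is injective. -/
theorem isPure_iff_injective_after_tensoring_injective_hull
    {R : Type u} [CommRing R] [IsNoetherianRing R] [IsLocalRing R]
    {E : Type u} [AddCommGroup E] [Module R E]
    (hE_inj : Module.Injective R E)
    (i : IsLocalRing.ResidueField R →ₗ[R] E) (hi : Function.Injective i)
    (hE_ess : ∀ N : Submodule R E, N ≠ ⊥ → N ⊓ LinearMap.range i ≠ ⊥)
    {M N : Type u} [AddCommGroup M] [AddCommGroup N] [Module R M] [Module R N]
    [Module.Finite R M] [Module.Free R M] (f : M →ₗ[R] N) :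
    f.IsPure ↔ Function.Injective (LinearMap.rTensor E f) := by
  classical
  constructor
  · intro h
    exact h E
  · intro hE K _ _
    set b := Module.Free.chooseBasis R M with hb
    set ι := Module.Free.ChooseBasisIndex R M with hι
    -- the coordinate equivalence  M ⊗ K ≃ (ι →₀ K)
    set eK : M ⊗[R] K ≃ₗ[R] (ι →₀ K) :=
      (LinearEquiv.rTensor K b.repr).trans (TensorProduct.finsuppScalarLeft R K ι) with heK
    set eE : M ⊗[R] E ≃ₗ[R] (ι →₀ E) :=
      (LinearEquiv.rTensor E b.repr).trans (TensorProduct.finsuppScalarLeft R E ι) with heE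
    rw [injective_iff_map_eq_zero]
    intro x hx
    by_contra hx0
    obtain ⟨j, hj⟩ : ∃ j, eK x j ≠ 0 := by
      by_contra h
      push_neg at h
      apply hx0
      have : eK x = 0 := Finsupp.ext h
      simpa using eK.injective (by simpa using this)
    obtain ⟨φ, hφ⟩ := exists_hom_to_E_ne_zero hE_inj i hi K (eK x j) hj
    -- naturality of the coordinate maps
    have hnat : ∀ y : M ⊗[R] K, eE (LinearMap.lTensor M φ y) j = φ (eK y j) := by
      have : (Finsupp.lapply j) ∘ₗ eE.toLinearMap ∘ₗ (LinearMap.lTensor M φ)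
          = φ ∘ₗ (Finsupp.lapply j) ∘ₗ eK.toLinearMap := by
        apply TensorProduct.ext'
        intro m k
        simp [heE, heK, LinearEquiv.rTensor, TensorProduct.congr,
          TensorProduct.finsuppScalarLeft_apply_tmul_apply]
      intro y
      simpa using LinearMap.congr_fun this y
    -- apply injectivity of f ⊗ E
    have hchase : LinearMap.rTensor E f (LinearMap.lTensor M φ x) = 0 := by
      have hcomm : LinearMap.rTensor E f ∘ₗ LinearMap.lTensor M φ
          = LinearMap.lTensor N φ ∘ₗ LinearMap.rTensor K f := by
        rw [LinearMap.rTensor_comp_lTensor, LinearMap.lTensor_comp_rTensor]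
      have hx' := LinearMap.congr_fun hcomm x
      simp only [LinearMap.comp_apply] at hx'
      rw [hx', hx, map_zero]
    have h0 : LinearMap.lTensor M φ x = 0 := by
      apply hE
      simpa using hchase
    apply hφ
    rw [← hnat x, h0]
    simp
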